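/- For deterministic automata G and R, the (G,R)-similarity control problem with required events is solvable (i.e., there exists a Σ_uc-admissible supervisor S with S||G cc-simulated by R) if and only if G is Σ_ucr-simulated by R. -/
import Mathlib


/-- An automaton with state type `S` and event alphabet `E`:
a transition relation and a set of initial states. -/
structure Automaton (S : Type) (E : Type) where
  trans : S → E → S → Prop
  init : Set S

/-- Extension of the transition relation to finite event sequences. -/
def TransSeq {S E : Type} (G : Automaton S E) : S → List E → S → Prop
  | x, [], x' => x = x'
  | x, σ :: s, x'' => ∃ x', G.trans x σ x' ∧ TransSeq G x' s x''

/-- `x` is `s`-reachable in `G`. -/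
def ReachSeq {S E : Type} (G : Automaton S E) (s : List E) (x : S) : Prop :=
  ∃ x₀ ∈ G.init, TransSeq G x₀ s x

/-- `x` is reachable in `G`. -/
def Reachable {S E : Type} (G : Automaton S E) (x : S) : Prop :=
  ∃ s : List E, ReachSeq G s x

/-- The language of an automaton: all event sequences executable from some initial state. -/
def Lang {S E : Type} (G : Automaton S E) : Set (List E) :=
  {s | ∃ x, ReachSeq G s x}

/-- `Φ` is a simulation from `G` to `R`. -/
def IsSimulation {X Z E : Type} (G : Automaton X E) (R : Automaton Z E)
    (Φ : Set (X × Z)) : Prop :=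
  (∀ x₀ ∈ G.init, ∃ z₀ ∈ R.init, (x₀, z₀) ∈ Φ) ∧
  (∀ p ∈ Φ, ∀ (σ : E), ∀ x', G.trans p.1 σ x' →
    ∃ z', R.trans p.2 σ z' ∧ (x', z') ∈ Φ)

/-- `G` is simulated by `R` (`G ⊑ R`). -/
def Simulated {X Z E : Type} (G : Automaton X E) (R : Automaton Z E) : Prop :=
  ∃ Φ, IsSimulation G R Φ

/-- `Φ` is a covariant-contravariant simulation from `G` to `R`, with required events `Sr`. -/
def IsCCSimulation {X Z E : Type} (Sr : Set E) (G : Automaton X E) (R : Automaton Z E)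
    (Φ : Set (X × Z)) : Prop :=
  IsSimulation G R Φ ∧
  (∀ p ∈ Φ, ∀ σ ∈ Sr, ∀ z', R.trans p.2 σ z' →
    ∃ x', G.trans p.1 σ x' ∧ (x', z') ∈ Φ)

/-- `G` is cc-simulated by `R` (`G ⊑_cc R`). -/
def CCSimulated {X Z E : Type} (Sr : Set E) (G : Automaton X E) (R : Automaton Z E) : Prop :=
  ∃ Φ, IsCCSimulation Sr G R Φ

/-- `Φ` is a bisimulation from `G` to `R`: both `Φ` and its inverse are simulations. -/
def IsBisimulation {X Z E : Type} (G : Automaton X E) (R : Automaton Z E)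
    (Φ : Set (X × Z)) : Prop :=
  IsSimulation G R Φ ∧ IsSimulation R G {p | (p.2, p.1) ∈ Φ}

/-- `G` is bisimilar to `R` (`G ≃ R`). -/
def Bisimilar {X Z E : Type} (G : Automaton X E) (R : Automaton Z E) : Prop :=
  ∃ Φ, IsBisimulation G R Φ

/-- `Φ` is a `Σ_uc`-simulation from `G` to `R`. -/
def IsUcSimulation {X Z E : Type} (Suc : Set E) (G : Automaton X E) (R : Automaton Z E)
    (Φ : Set (X × Z)) : Prop :=
  (∀ x₀ ∈ G.init, ∃ z₀ ∈ R.init, (x₀, z₀) ∈ Φ) ∧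
  (∀ p ∈ Φ, ∀ σ ∈ Suc, ∀ x', G.trans p.1 σ x' →
    ∃ z', R.trans p.2 σ z' ∧ (x', z') ∈ Φ)

/-- `Φ` is a `Σ_ucr`-simulation from `G` to `R`:
(initial state), (Σ_uc-forward) and (Σ_r-backward). -/
def IsUcrSimulation {X Z E : Type} (Suc Sr : Set E) (G : Automaton X E) (R : Automaton Z E)
    (Φ : Set (X × Z)) : Prop :=
  IsUcSimulation Suc G R Φ ∧
  (∀ p ∈ Φ, ∀ σ ∈ Sr, ∀ z', R.trans p.2 σ z' →
    ∃ x', G.trans p.1 σ x' ∧ (x', z') ∈ Φ)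

/-- Synchronous composition `S || G`. -/
def Sync {Y X E : Type} (S : Automaton Y E) (G : Automaton X E) : Automaton (Y × X) E where
  trans p σ q := S.trans p.1 σ q.1 ∧ G.trans p.2 σ q.2
  init := S.init ×ˢ G.init

/-- `S` is `Σ_uc`-admissible with respect to `G`. -/
def Admissible {Y X E : Type} (Suc : Set E) (S : Automaton Y E) (G : Automaton X E) : Prop :=
  ∀ p : Y × X, Reachable (Sync S G) p → ∀ σ ∈ Suc,
    (∃ x', G.trans p.2 σ x') → ∃ q, (Sync S G).trans p σ q

/-- `match_{G,R}(W, σ, W')`. -/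
def MatchW {X Z E : Type} (G : Automaton X E) (R : Automaton Z E)
    (W : Set (X × Z)) (σ : E) (W' : Set (X × Z)) : Prop :=
  ∀ p ∈ W, ∀ x', G.trans p.1 σ x' →
    ∃ z', R.trans p.2 σ z' ∧ (x', z') ∈ W'

/-- `Ecs` is a `Σ_ucr`-controllability set from `G` to `R`. -/
def ControlSet {X Z E : Type} (Suc Sr : Set E) (G : Automaton X E) (R : Automaton Z E)
    (Ecs : Set (Set (X × Z))) : Prop :=
  (∃ W₀ ∈ Ecs, ∀ x₀ ∈ G.init, ∃ z₀ ∈ R.init, (x₀, z₀) ∈ W₀) ∧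
  (∀ W ∈ Ecs, ∀ σ ∈ Suc, ∃ W' ∈ Ecs, MatchW G R W σ W') ∧
  (∀ W ∈ Ecs, ∀ p ∈ W, ∀ σ ∈ Sr, ∀ z', R.trans p.2 σ z' →
    ∃ x', ∃ W' ∈ Ecs, G.trans p.1 σ x' ∧ (x', z') ∈ W' ∧ MatchW G R W σ W')

/-- The downward closure `P(E) = ⋃_{W ∈ E} 𝒫(W)`. -/
def PE {X Z : Type} (Ecs : Set (Set (X × Z))) : Set (Set (X × Z)) :=
  {W | ∃ W' ∈ Ecs, W ⊆ W'}

/-- `⋃_{(x,z) ∈ W} {x' : x →σ x'} × {z' : z →σ z'}`. -/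
def SuccSet {X Z E : Type} (G : Automaton X E) (R : Automaton Z E)
    (W : Set (X × Z)) (σ : E) : Set (X × Z) :=
  {q | ∃ p ∈ W, G.trans p.1 σ q.1 ∧ R.trans p.2 σ q.2}

/-- The automaton `𝒜(E)` induced by a `Σ_ucr`-controllability set `Ecs`.
Its states are the members of `P(Ecs)` (enforced in the transition relation
and initial-state set). -/
def AutA {X Z E : Type} (G : Automaton X E) (R : Automaton Z E)
    (Ecs : Set (Set (X × Z))) : Automaton (Set (X × Z)) E where
  trans W σ W' :=
    W ∈ PE Ecs ∧ W' ∈ PE Ecs ∧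
    (∃ p ∈ W, ∃ q ∈ W', G.trans p.1 σ q.1 ∧ R.trans p.2 σ q.2) ∧
    MatchW G R W σ W' ∧ W' ⊆ SuccSet G R W σ
  init := {W₀ | W₀ ∈ PE Ecs ∧ W₀ ⊆ G.init ×ˢ R.init ∧
    ∀ x₀ ∈ G.init, ∃ z₀ ∈ R.init, (x₀, z₀) ∈ W₀}

/-- A deterministic automaton: a single initial state, and at most one
`σ`-successor of each state. -/
def Deterministic {S E : Type} (G : Automaton S E) : Prop :=
  (∃ x₀, G.init = {x₀}) ∧
  ∀ x (σ : E) x₁ x₂, G.trans x σ x₁ → G.trans x σ x₂ → x₁ = x₂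

/-- `Φ` is uniform with respect to `Sr`. -/
def UniformRel {X Z E : Type} (Sr : Set E) (G : Automaton X E) (R : Automaton Z E)
    (Φ : Set (X × Z)) : Prop :=
  ∀ (s : List E), ∀ p₁ ∈ Φ, ∀ p₂ ∈ Φ,
    ReachSeq G s p₁.1 → ReachSeq G s p₂.1 → ReachSeq R s p₁.2 → ReachSeq R s p₂.2 →
    ∀ σ ∈ Sr, (∃ z', R.trans p₁.2 σ z') → ∀ x₂', G.trans p₂.1 σ x₂' →
      ∃ z₂', R.trans p₂.2 σ z₂' ∧ (x₂', z₂') ∈ Φ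

/-- The fixpoint operator `F_{(G,R)}`. -/
def Fop {X Z E : Type} (Suc Sr : Set E) (G : Automaton X E) (R : Automaton Z E)
    (Ecs : Set (Set (X × Z))) : Set (Set (X × Z)) :=
  {W | W ∈ Ecs ∧
    (∀ σ ∈ Suc, ∃ W' ∈ Ecs, MatchW G R W σ W') ∧
    (∀ p ∈ W, ∀ σ ∈ Sr, ∀ z', R.trans p.2 σ z' →
      ∃ x', ∃ W' ∈ Ecs, G.trans p.1 σ x' ∧ (x', z') ∈ W' ∧ MatchW G R W σ W')}

/-- The greatest fixpoint `E↑` of `F_{(G,R)}`: the union of all post-fixpoints. -/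
def Egfp {X Z E : Type} (Suc Sr : Set E) (G : Automaton X E) (R : Automaton Z E) :
    Set (Set (X × Z)) :=
  ⋃₀ {Ecs | Ecs ⊆ Fop Suc Sr G R Ecs}

lemma transSeq_snoc {S E : Type} (G : Automaton S E) {σ' : E} :
    ∀ (s : List E) (x x' x'' : S), TransSeq G x s x' → G.trans x' σ' x'' →
      TransSeq G x (s ++ [σ']) x'' := by
  intro s
  induction s with
  | nil => intro x x' x'' h ht; cases h; exact ⟨x'', ht, rfl⟩
  | cons a t ih =>
    rintro x x' x'' ⟨y, hy, hseq⟩ ht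
    exact ⟨y, hy, ih y x' x'' hseq ht⟩

lemma reachable_step {S E : Type} (G : Automaton S E) {x x' : S} {σ : E}
    (h : Reachable G x) (ht : G.trans x σ x') : Reachable G x' := by
  obtain ⟨s, x₀, h₀, hseq⟩ := h
  exact ⟨s ++ [σ], x₀, h₀, transSeq_snoc G s x₀ x x' hseq ht⟩

lemma reach_invariant {S E : Type} (G : Automaton S E) (P : S → Prop)
    (h0 : ∀ x ∈ G.init, P x)
    (hstep : ∀ x σ x', P x → G.trans x σ x' → P x') :
    ∀ x, Reachable G x → P x := by
  have key : ∀ (s : List E) (x x' : S), P x → TransSeq G x s x' → P x' := by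
    intro s
    induction s with
    | nil => intro x x' hp h; cases h; exact hp
    | cons a t ih =>
      rintro x x' hp ⟨y, hy, hseq⟩
      exact ih y x' (hstep x a y hp hy) hseq
  rintro x ⟨s, x₀, h₀, hseq⟩
  exact key s x₀ x (h0 x₀ h₀) hseq

/-- for deterministic `G` and `R`, the similarity control problem with
required events is solvable iff `G` is `Σ_ucr`-simulated by `R`. -/
theorem deterministic_solvable_iff_ucrSimulated {E X Z : Type} (Suc Sr : Set E)
    (G : Automaton X E) (R : Automaton Z E)
    (hG : Deterministic G) (hR : Deterministic R) :
    (∃ (Y : Type) (S : Automaton Y E), S.init.Nonempty ∧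
      Admissible Suc S G ∧ CCSimulated Sr (Sync S G) R) ↔
    (∃ Φ : Set (X × Z), IsUcrSimulation Suc Sr G R Φ) := by
  obtain ⟨⟨x₀, hGinit⟩, hGdet⟩ := hG
  obtain ⟨⟨z₀, hRinit⟩, hRdet⟩ := hR
  constructor
  · rintro ⟨Y, S, ⟨y₀, hy₀⟩, hAdm, Φ, ⟨⟨hinit, hfwd⟩, hback⟩⟩
    refine ⟨{p : X × Z | ∃ y : Y, Reachable (Sync S G) (y, p.1) ∧ ((y, p.1), p.2) ∈ Φ},
      ⟨⟨?_, ?_⟩, ?_⟩⟩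
    · intro xi hxi
      obtain ⟨z, hz, hΦ⟩ := hinit (y₀, xi) ⟨hy₀, hxi⟩
      exact ⟨z, hz, y₀, ⟨[], (y₀, xi), ⟨hy₀, hxi⟩, rfl⟩, hΦ⟩
    · rintro ⟨x, z⟩ ⟨y, hreach, hΦ⟩ σ hσ x' hx'
      obtain ⟨q, hq⟩ := hAdm (y, x) hreach σ hσ ⟨x', hx'⟩
      have hqx : q.2 = x' := hGdet x σ q.2 x' hq.2 hx'
      have htr : (Sync S G).trans (y, x) σ (q.1, x') := ⟨hq.1, hqx ▸ hq.2⟩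
      obtain ⟨z', hz', hΦ'⟩ := hfwd ((y, x), z) hΦ σ (q.1, x') htr
      exact ⟨z', hz', q.1, reachable_step _ hreach htr, hΦ'⟩
    · rintro ⟨x, z⟩ ⟨y, hreach, hΦ⟩ σ hσ z' hz'
      obtain ⟨⟨y', x'⟩, htr, hΦ'⟩ := hback ((y, x), z) hΦ σ hσ z' hz'
      exact ⟨x', htr.2, y', reachable_step _ hreach htr, hΦ'⟩
  · rintro ⟨Ψ, ⟨⟨hinit, hfwd⟩, hback⟩⟩
    set S : Automaton (X × Z) E :=
      { trans := fun p σ q => G.trans p.1 σ q.1 ∧ R.trans p.2 σ q.2 ∧ p ∈ Ψ ∧ q ∈ Ψ,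
        init := {p | p.1 ∈ G.init ∧ p.2 ∈ R.init ∧ p ∈ Ψ} } with hS
    -- invariant on reachable states of Sync S G
    have hinv : ∀ p : (X × Z) × X, Reachable (Sync S G) p → p.1.1 = p.2 ∧ p.1 ∈ Ψ := by
      apply reach_invariant
      · rintro ⟨⟨x, z⟩, x₂⟩ ⟨⟨hx, hz, hΨ⟩, hx₂⟩
        have : x = x₀ := by rw [hGinit] at hx; exact hx
        have h2 : x₂ = x₀ := by rw [hGinit] at hx₂; exact hx₂
        exact ⟨by simp [this, h2], hΨ⟩
      · rintro ⟨⟨x, z⟩, x₂⟩ σ ⟨⟨x', z'⟩, x₂'⟩ ⟨heq, hΨ⟩ ⟨⟨hgx, hrz, _, hΨ'⟩, hg2⟩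
        simp only at heq
        subst heq
        exact ⟨hGdet x σ x' x₂' hgx hg2, hΨ'⟩
    have hx₀init : x₀ ∈ G.init := by rw [hGinit]; exact rfl
    obtain ⟨zi, hzi, hΨ₀⟩ := hinit x₀ hx₀init
    refine ⟨X × Z, S, ⟨(x₀, zi), hx₀init, hzi, hΨ₀⟩, ?_, ?_⟩
    · -- Admissible
      rintro ⟨⟨x, z⟩, x₂⟩ hreach σ hσ ⟨x', hx'⟩
      obtain ⟨heq, hΨ⟩ := hinv _ hreach
      simp only at heq
      subst heq
      obtain ⟨z', hz', hΨ'⟩ := hfwd (x, z) hΨ σ hσ x' hx'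
      exact ⟨((x', z'), x'), ⟨hx', hz', hΨ, hΨ'⟩, hx'⟩
    · -- CCSimulated
      refine ⟨{q : ((X × Z) × X) × Z | q.1.1.1 = q.1.2 ∧ q.1.1.2 = q.2 ∧ q.1.1 ∈ Ψ},
        ⟨?_, ?_⟩, ?_⟩
      · rintro ⟨⟨x, z⟩, x₂⟩ ⟨⟨hx, hz, hΨ⟩, hx₂⟩
        have h1 : x = x₀ := by rw [hGinit] at hx; exact hx
        have h2 : x₂ = x₀ := by rw [hGinit] at hx₂; exact hx₂
        exact ⟨z, hz, by simp [h1, h2], rfl, hΨ⟩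
      · rintro ⟨⟨⟨x, z⟩, x₂⟩, z₂⟩ ⟨heq1, heq2, hΨ⟩ σ ⟨⟨x', z'⟩, x₂'⟩ ⟨⟨hgx, hrz, _, hΨ'⟩, hg2⟩
        simp only at heq1 heq2
        subst heq1; subst heq2
        have : x' = x₂' := hGdet x σ x' x₂' hgx hg2
        exact ⟨z', hrz, this, rfl, hΨ'⟩
      · rintro ⟨⟨⟨x, z⟩, x₂⟩, z₂⟩ ⟨heq1, heq2, hΨ⟩ σ hσ z' hz'
        simp only at heq1 heq2
        subst heq1; subst heq2
        obtain ⟨x', hx', hΨ'⟩ := hback (x, z) hΨ σ hσ z' hz'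
        exact ⟨((x', z'), x'), ⟨⟨hx', hz', hΨ, hΨ'⟩, hx'⟩, rfl, rfl, hΨ'⟩
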